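/- Let ℓ and r be positive integers. Then the binary expansions of ℓ, 2r, and ℓ+r are not pairwise disjoint. -/

import Mathlib

lemma and_key (x y : ℕ) : x &&& y = x % 2 * (y % 2) + 2 * (x / 2 &&& y / 2) := by
  conv_lhs => rw [← Nat.bit_bodd_div2 x, ← Nat.bit_bodd_div2 y]
  rw [Nat.land_bit]
  cases hx : Nat.bodd x <;> cases hy : Nat.bodd y <;>
    simp [Nat.bit, Nat.div2_val, Nat.mod_two_of_bodd, hx, hy] <;> omega

lemma and_split (x y : ℕ) (h : x &&& y = 0) :
    (x % 2 = 0 ∨ y % 2 = 0) ∧ x / 2 &&& y / 2 = 0 := by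
  have hk := and_key x y
  rw [h] at hk
  rcases Nat.mod_two_eq_zero_or_one x with hx | hx <;>
      rcases Nat.mod_two_eq_zero_or_one y with hy | hy <;>
    rw [hx, hy] at hk <;> constructor <;> omega

lemma lemH : ∀ b : ℕ, ∀ a : ℕ, b % 2 = 1 →
    ¬(a &&& b = 0 ∧ a &&& (a + (b + 1) / 2) = 0 ∧ b &&& (a + (b + 1) / 2) = 0) := by
  intro b
  induction b using Nat.strong_induction_on with
  | _ b ih =>
    rintro a hb ⟨h1, h2, h3⟩
    obtain ⟨p1, q1⟩ := and_split a b h1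
    obtain ⟨p2, q2⟩ := and_split a (a + (b + 1) / 2) h2
    obtain ⟨p3, q3⟩ := and_split b (a + (b + 1) / 2) h3
    have ha : a % 2 = 0 := by omega
    have hw : (a + (b + 1) / 2) % 2 = 0 := by omega
    have hb4 : b % 4 = 3 := by omega
    have hw2 : (a + (b + 1) / 2) / 2 = a / 2 + (b / 2 + 1) / 2 := by omega
    rw [hw2] at q2 q3
    exact ih (b / 2) (by omega) (a / 2) (by omega) ⟨q1, q2, q3⟩

lemma lemG : ∀ n x y : ℕ, x + y ≤ n → 0 < x → 0 < y →
    ¬(x &&& y = 0 ∧ x &&& (x + y / 2) = 0 ∧ y &&& (x + y / 2) = 0) := by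
  intro n
  induction n with
  | zero => intro x y h hx hy _; omega
  | succ n ih =>
    rintro x y hn hx hy ⟨h1, h2, h3⟩
    obtain ⟨p1, q1⟩ := and_split x y h1
    obtain ⟨p2, q2⟩ := and_split x (x + y / 2) h2
    obtain ⟨p3, q3⟩ := and_split y (x + y / 2) h3
    rcases eq_or_ne y 1 with hy1 | hy1
    · rw [hy1] at h2
      simp [Nat.and_self] at h2
      omega
    by_cases hx2 : x % 2 = 0
    · by_cases hy2 : y % 2 = 0
      · -- both even
        have hw2 : (x + y / 2) / 2 = x / 2 + (y / 2) / 2 := by omega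
        rw [hw2] at q2 q3
        exact ih (x / 2) (y / 2) (by omega) (by omega) (by omega) ⟨q1, q2, q3⟩
      · -- x even, y odd; then (b+? ) w even so y % 4 = 1
        have hw : (x + y / 2) % 2 = 0 := by omega
        have hy4 : y % 4 = 1 := by omega
        have hw2 : (x + y / 2) / 2 = x / 2 + (y / 2) / 2 := by omega
        rw [hw2] at q2 q3
        exact ih (x / 2) (y / 2) (by omega) (by omega) (by omega) ⟨q1, q2, q3⟩
    · -- x odd; then y even and y/2 odd
      have hy2 : y % 2 = 0 := by omega
      have hw : (x + y / 2) % 2 = 0 := by omega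
      have hy4 : y % 4 = 2 := by omega
      have hw2 : (x + y / 2) / 2 = x / 2 + (y / 2 + 1) / 2 := by omega
      rw [hw2] at q2 q3
      exact lemH (y / 2) (x / 2) (by omega) ⟨q1, q2, q3⟩

theorem stmt4 (l r : ℕ) (hl : 0 < l) (hr : 0 < r) :
    ¬ (l &&& (2 * r) = 0 ∧ l &&& (l + r) = 0 ∧ (2 * r) &&& (l + r) = 0) := by
  have h2r : (2 * r) / 2 = r := by omega
  have := lemG (l + 2 * r) l (2 * r) le_rfl hl (by omega)
  rw [h2r] at this
  exact this
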